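/- For a Lie algebroid E of rank n with nowhere-vanishing top form μ and a closed 1-form φ, the deformed differential d^φ η = dη + φ∧η satisfies (d^φ)² = 0, and *_μ intertwines ∂_μ − i_φ with d + e_φ up to sign: (−1)^{|a|} *_μ^{-1}(d + e_φ) *_μ(a) = (∂_μ − i_φ)(a), yielding Poincaré duality H^k(E, d^φ) ≅ H_{n−k}(E, ∂_μ − i_φ). -/

import Mathlib

/-- The sign `(-1)^e` for an integer `e`. -/
def sgn (e : ℤ) : ℤ := (((-1 : ℤˣ) ^ e : ℤˣ) : ℤ)


lemma sgn_mul_self (e : ℤ) : sgn e * sgn e = 1 := by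
  unfold sgn; rw [← Units.val_mul, Int.units_mul_self, Units.val_one]

lemma sgn_smul_sgn_smul {M : Type*} [AddCommGroup M] (e : ℤ) (x : M) :
    sgn e • sgn e • x = x := by
  rw [smul_smul, sgn_mul_self, one_zsmul]

lemma sgn_one : sgn 1 = -1 := by decide

lemma zsmul_mem_submodule {M : Type*} [AddCommGroup M] [Module ℝ M]
    (p : Submodule ℝ M) {x : M} (h : x ∈ p) (z : ℤ) : z • x ∈ p :=
  p.toAddSubgroup.zsmul_mem h z

/-- Degree-`k` cohomology of a graded complex. -/
abbrev gradedCohomology {B : Type*} [AddCommGroup B] [Module ℝ B]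
    (HB : ℤ → Submodule ℝ B) (d : B →ₗ[ℝ] B) (k : ℤ) :=
  ↥(HB k ⊓ LinearMap.ker d) ⧸
    (Submodule.comap (HB k ⊓ LinearMap.ker d).subtype (Submodule.map d (HB (k - 1))))

/-- Degree-`j` homology of a graded complex with differential of degree `−1`. -/
abbrev gradedHomology {A : Type*} [AddCommGroup A] [Module ℝ A]
    (HA : ℤ → Submodule ℝ A) (D : A →ₗ[ℝ] A) (j : ℤ) :=
  ↥(HA j ⊓ LinearMap.ker D) ⧸
    (Submodule.comap (HA j ⊓ LinearMap.ker D).subtype (Submodule.map D (HA (j + 1))))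

/-- For a Lie algebroid `E` of rank `n` with nowhere-vanishing top form `μ`
and a closed 1-form `φ`, the deformed (Witten) differential `d^φ η = dη + φ∧η` satisfies
`(d^φ)² = 0`, the isomorphism `*_μ` intertwines `∂_μ − i_φ` with `d + e_φ` up to sign:
`(−1)^{|a|} *_μ^{-1}((d + e_φ)(*_μ a)) = (∂_μ − i_φ)(a)`, and there is Poincaré duality
`H^k(E, d^φ) ≅ H_{n−k}(E, ∂_μ − i_φ)`.  The key identity `i(i_φ a)μ = −(−1)^{|a|} φ ∧ i_a μ`
is encoded by `hkey`. -/
theorem statement14 {A : Type*} [AddCommGroup A] [Module ℝ A]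
    {B : Type*} [Ring B] [Algebra ℝ B]
    (n : ℕ)
    (HA : ℤ → Submodule ℝ A) (HB : ℤ → Submodule ℝ B)
    (hspanA : ∀ a : A, a ∈ Submodule.span ℝ (⋃ k : ℤ, (HA k : Set A)))
    (hmulB : ∀ (i j : ℤ) (a b : B), a ∈ HB i → b ∈ HB j → a * b ∈ HB (i + j))
    (hcommB : ∀ (i j : ℤ) (a b : B), a ∈ HB i → b ∈ HB j → a * b = sgn (i * j) • (b * a))
    (d : B →ₗ[ℝ] B)
    (hd2 : d ∘ₗ d = 0)
    (hddeg : ∀ (k : ℤ) (ω : B), ω ∈ HB k → d ω ∈ HB (k + 1))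
    (hdLeib : ∀ (k : ℤ) (a b : B), a ∈ HB k → d (a * b) = d a * b + sgn k • (a * d b))
    -- the closed 1-form φ, as a form
    (φ : B) (hφdeg : φ ∈ HB 1) (hφclosed : d φ = 0)
    -- the isomorphism *_μ and the operator ∂_μ
    (star : A ≃ₗ[ℝ] B)
    (hstar : ∀ k : ℤ, Submodule.map (star : A →ₗ[ℝ] B) (HA k) = HB ((n : ℤ) - k))
    (D : A →ₗ[ℝ] A)
    (hDdef : ∀ (k : ℤ) (a : A), a ∈ HA k → D a = sgn k • star.symm (d (star a)))
    -- contraction of multivectors by φ, with the key identity i(i_φ a)μ = −(−1)^{|a|} φ ∧ i_a μ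
    (insφ : A →ₗ[ℝ] A)
    (hinsdeg : ∀ (k : ℤ) (a : A), a ∈ HA k → insφ a ∈ HA (k - 1))
    (hkey : ∀ (k : ℤ) (a : A), a ∈ HA k → star (insφ a) = -(sgn k • (φ * star a))) :
    (∀ ω : B, (d + LinearMap.mulLeft ℝ φ) ((d + LinearMap.mulLeft ℝ φ) ω) = 0) ∧
    (∀ (k : ℤ) (a : A), a ∈ HA k →
      sgn k • star.symm (d (star a) + φ * star a) = D a - insφ a) ∧
    (∀ k : ℤ, Nonempty
      (gradedCohomology HB (d + LinearMap.mulLeft ℝ φ) k ≃ₗ[ℝ]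
        gradedHomology HA (D - insφ) ((n : ℤ) - k))) := by
  -- φ * φ = 0
  have hφφ : φ * φ = 0 := by
    have h := hcommB 1 1 φ φ hφdeg hφdeg
    rw [one_mul, sgn_one, neg_smul, one_zsmul] at h
    have h2 : (2 : ℝ) • (φ * φ) = 0 := by
      rw [two_smul]
      nth_rewrite 1 [h]
      exact neg_add_cancel _
    have := congrArg (fun x => (1/2 : ℝ) • x) h2
    simpa [smul_smul] using this
  have hdd : ∀ ω : B, d (d ω) = 0 := fun ω => congrFun (congrArg DFunLike.coe hd2) ω
  -- Part 1
  have part1 : ∀ ω : B, (d + LinearMap.mulLeft ℝ φ) ((d + LinearMap.mulLeft ℝ φ) ω) = 0 := by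
    intro ω
    simp only [LinearMap.add_apply, LinearMap.mulLeft_apply, map_add, mul_add]
    rw [hdd, hdLeib 1 φ ω hφdeg, hφclosed, sgn_one, neg_smul, one_zsmul, zero_mul,
      ← mul_assoc, hφφ, zero_mul]
    abel
  -- Part 2
  have part2 : ∀ (k : ℤ) (a : A), a ∈ HA k →
      sgn k • star.symm (d (star a) + φ * star a) = D a - insφ a := by
    intro k a ha
    have h1 : insφ a = -(sgn k • star.symm (φ * star a)) := by
      have := congrArg star.symm (hkey k a ha)
      rwa [star.symm_apply_apply, map_neg, map_zsmul] at this
    rw [map_add, smul_add, ← hDdef k a ha]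
    have h2 : sgn k • star.symm (φ * star a) = -insφ a := by rw [h1, neg_neg]
    rw [h2, sub_eq_add_neg]
  refine ⟨part1, part2, ?_⟩
  -- Part 3
  set d' : B →ₗ[ℝ] B := d + LinearMap.mulLeft ℝ φ with hd'
  set D' : A →ₗ[ℝ] A := D - insφ with hD'
  -- intertwining: star (D' a) = sgn m • d' (star a)
  have hintw : ∀ (m : ℤ) (a : A), a ∈ HA m → star (D' a) = sgn m • d' (star a) := by
    intro m a ha
    have := congrArg star (part2 m a ha)
    rw [map_zsmul, star.apply_symm_apply] at this
    rw [hD', hd']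
    simpa using this.symm
  intro k
  set j : ℤ := (n : ℤ) - k with hj
  have hnj : (n : ℤ) - j = k := by omega
  have hnj1 : (n : ℤ) - (j + 1) = k - 1 := by omega
  have hstarj : Submodule.map (star : A →ₗ[ℝ] B) (HA j) = HB k := by rw [hstar, hnj]
  have hstarj1 : Submodule.map (star : A →ₗ[ℝ] B) (HA (j + 1)) = HB (k - 1) := by
    rw [hstar, hnj1]
  -- image of the cycle space
  have him : Submodule.map (star : A →ₗ[ℝ] B) (HA j ⊓ LinearMap.ker D')
      = HB k ⊓ LinearMap.ker d' := by
    apply le_antisymm <;> rw [SetLike.le_def]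
    · rintro x hx
      rw [Submodule.mem_map] at hx
      obtain ⟨a, ha, rfl⟩ := hx
      obtain ⟨haj, haker⟩ := Submodule.mem_inf.mp ha
      rw [LinearMap.mem_ker] at haker
      have h := hintw j a haj
      rw [haker, map_zero] at h
      refine Submodule.mem_inf.mpr ⟨hstarj ▸ Submodule.mem_map_of_mem haj, ?_⟩
      rw [LinearMap.mem_ker, LinearEquiv.coe_coe,
        ← sgn_smul_sgn_smul j (d' (star a)), ← h, smul_zero]
    · rintro x hx
      obtain ⟨hxk, hxker⟩ := Submodule.mem_inf.mp hx
      rw [LinearMap.mem_ker] at hxker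
      have : x ∈ Submodule.map (star : A →ₗ[ℝ] B) (HA j) := hstarj ▸ hxk
      obtain ⟨a, haj, rfl⟩ := this
      rw [LinearEquiv.coe_coe] at hxker
      refine Submodule.mem_map_of_mem (Submodule.mem_inf.mpr ⟨haj, ?_⟩)
      rw [LinearMap.mem_ker]
      have h := hintw j a haj
      rw [hxker, smul_zero] at h
      exact star.injective (by rw [h, map_zero])
  -- image of the boundary space
  have him2 : Submodule.map (star : A →ₗ[ℝ] B) (Submodule.map D' (HA (j + 1)))
      = Submodule.map d' (HB (k - 1)) := by
    apply le_antisymm <;> rw [SetLike.le_def]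
    · rintro x hx
      rw [Submodule.mem_map] at hx
      obtain ⟨y, hy, rfl⟩ := hx
      obtain ⟨b, hb, rfl⟩ := Submodule.mem_map.mp hy
      refine Submodule.mem_map.mpr ⟨sgn (j + 1) • star b, zsmul_mem_submodule _
        (hstarj1 ▸ Submodule.mem_map_of_mem hb) _, ?_⟩
      rw [map_zsmul, ← hintw (j + 1) b hb, LinearEquiv.coe_coe]
    · rintro x hx
      obtain ⟨c, hc, rfl⟩ := Submodule.mem_map.mp hx
      have : c ∈ Submodule.map (star : A →ₗ[ℝ] B) (HA (j + 1)) := hstarj1 ▸ hc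
      obtain ⟨b, hb, rfl⟩ := this
      refine Submodule.mem_map.mpr
        ⟨D' (sgn (j + 1) • b), Submodule.mem_map_of_mem (zsmul_mem_submodule _ hb _), ?_⟩
      rw [LinearEquiv.coe_coe, map_zsmul, map_zsmul, hintw (j + 1) b hb,
        sgn_smul_sgn_smul]
  -- the restricted equivalence
  set P : Submodule ℝ A := HA j ⊓ LinearMap.ker D' with hP
  set Q : Submodule ℝ B := HB k ⊓ LinearMap.ker d' with hQ
  let E : ↥P ≃ₗ[ℝ] ↥Q :=
    (star.submoduleMap P).trans (LinearEquiv.ofEq _ _ him)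
  have hE : ∀ y : ↥P, ((E y : ↥Q) : B) = star (y : A) := by
    intro y
    simp [E, LinearEquiv.submoduleMap_apply]
  have hmapsub : Submodule.map (E : ↥P →ₗ[ℝ] ↥Q)
      (Submodule.comap P.subtype (Submodule.map D' (HA (j + 1))))
      = Submodule.comap Q.subtype (Submodule.map d' (HB (k - 1))) := by
    apply le_antisymm <;> rw [SetLike.le_def]
    · rintro x hx
      obtain ⟨y, hy, rfl⟩ := Submodule.mem_map.mp hx
      rw [Submodule.mem_comap] at hy
      rw [Submodule.mem_comap, Submodule.coe_subtype, LinearEquiv.coe_coe, hE y, ← him2]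
      exact Submodule.mem_map_of_mem hy
    · rintro x hx
      rw [Submodule.mem_comap, Submodule.coe_subtype] at hx
      have hx' : (x : B) ∈ Submodule.map (star : A →ₗ[ℝ] B)
          (Submodule.map D' (HA (j + 1))) := him2 ▸ hx
      obtain ⟨a, haX, hax⟩ := hx'
      have haQ : star a ∈ Q := by
        rw [LinearEquiv.coe_coe] at hax
        rw [hax]; exact x.2
      have haP : a ∈ P := by
        have : star a ∈ Submodule.map (star : A →ₗ[ℝ] B) P := him ▸ haQ
        obtain ⟨p, hp, hpa⟩ := this
        rw [LinearEquiv.coe_coe] at hpa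
        have : p = a := star.injective hpa
        exact this ▸ hp
      refine Submodule.mem_map.mpr ⟨⟨a, haP⟩, ?_, ?_⟩
      · rw [Submodule.mem_comap]; exact haX
      · apply Subtype.ext
        rw [LinearEquiv.coe_coe, hE ⟨a, haP⟩]
        rw [LinearEquiv.coe_coe] at hax
        exact hax
  exact ⟨(Submodule.Quotient.equiv _ _ E hmapsub).symm⟩
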